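/- For every integer m ≥ 1 and real r with 0 < r < 1, the function p ↦ (⌊1/p⌋·p^r + (1 - ⌊1/p⌋·p)^r)^(1/r) is strictly decreasing on (0, 1]; for 1 < r < ∞ it is strictly increasing on (0, 1]. -/

import Mathlib

open Real Set

private lemma cont_rpow {r : ℝ} (hr : 0 ≤ r) : Continuous fun x : ℝ => x ^ r :=
  continuous_iff_continuousAt.mpr fun x => Real.continuousAt_rpow_const x r (Or.inr hr)

private lemma piece_deriv (m : ℕ) (r : ℝ) {p : ℝ} (hp : p ≠ 0) (hmp : 1 - (m:ℝ)*p ≠ 0) :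
    HasDerivAt (fun p : ℝ => (m:ℝ) * p ^ r + (1 - (m:ℝ)*p) ^ r)
      ((m:ℝ) * (r * p ^ (r-1)) + r * (1 - (m:ℝ)*p) ^ (r-1) * (-(m:ℝ))) p := by
  have h1 : HasDerivAt (fun p : ℝ => p ^ r) (r * p ^ (r-1)) p :=
    Real.hasDerivAt_rpow_const (Or.inl hp)
  have h2 : HasDerivAt (fun p : ℝ => 1 - (m:ℝ)*p) (-(m:ℝ)) p := by
    simpa using (((hasDerivAt_id' p).const_mul (m:ℝ)).const_sub (1:ℝ))
  have h3 : HasDerivAt (fun p : ℝ => (1 - (m:ℝ)*p) ^ r)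
      (r * (1 - (m:ℝ)*p) ^ (r-1) * (-(m:ℝ))) p :=
    by have h := (Real.hasDerivAt_rpow_const (x := 1 - (m:ℝ)*p) (p := r) (Or.inl hmp)).comp p h2; exact h
  exact (h1.const_mul _).add h3

private lemma piece_cont (m : ℕ) {r : ℝ} (hr : 0 ≤ r) :
    Continuous (fun p : ℝ => (m:ℝ) * p ^ r + (1 - (m:ℝ)*p) ^ r) := by
  have h1 : Continuous fun p : ℝ => (m:ℝ) * p ^ r := continuous_const.mul (cont_rpow hr)
  have h2 : Continuous fun p : ℝ => 1 - (m:ℝ)*p := by continuity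
  exact h1.add ((cont_rpow hr).comp h2)

private lemma interval_facts {m : ℕ} (hm : 1 ≤ m) {x : ℝ}
    (hx : x ∈ Ioo (1/((m:ℝ)+1)) (1/(m:ℝ))) :
    0 < x ∧ 0 < 1 - (m:ℝ)*x ∧ 1 - (m:ℝ)*x < x := by
  have hm0 : (0:ℝ) < m := by exact_mod_cast hm
  have hx0 : 0 < x := lt_trans (by positivity) hx.1
  have h1 : (m:ℝ) * x < 1 := by
    have := (lt_div_iff₀ hm0).mp hx.2; linarith [this]
  have h2 : 1 < x * ((m:ℝ)+1) := (div_lt_iff₀ (by positivity)).mp hx.1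
  exact ⟨hx0, by linarith, by nlinarith⟩

private lemma piece_anti (m : ℕ) (hm : 1 ≤ m) {r : ℝ} (hr0 : 0 < r) (hr1 : r < 1) :
    StrictAntiOn (fun p : ℝ => (m:ℝ) * p ^ r + (1 - (m:ℝ)*p) ^ r)
      (Icc (1/((m:ℝ)+1)) (1/(m:ℝ))) := by
  have hm0 : (0:ℝ) < m := by exact_mod_cast hm
  apply strictAntiOn_of_deriv_neg (convex_Icc _ _) (piece_cont m hr0.le).continuousOn
  intro x hx
  rw [interior_Icc] at hx
  obtain ⟨hx0, hmx, hlt⟩ := interval_facts hm hx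
  rw [(piece_deriv m r hx0.ne' hmx.ne').deriv]
  have hbase : x ^ (r-1) < (1 - (m:ℝ)*x) ^ (r-1) :=
    Real.rpow_lt_rpow_of_neg hmx hlt (by linarith)
  nlinarith [mul_pos hm0 hr0]

private lemma piece_mono (m : ℕ) (hm : 1 ≤ m) {r : ℝ} (hr1 : 1 < r) :
    StrictMonoOn (fun p : ℝ => (m:ℝ) * p ^ r + (1 - (m:ℝ)*p) ^ r)
      (Icc (1/((m:ℝ)+1)) (1/(m:ℝ))) := by
  have hm0 : (0:ℝ) < m := by exact_mod_cast hm
  apply strictMonoOn_of_deriv_pos (convex_Icc _ _) (piece_cont m (by linarith)).continuousOn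
  intro x hx
  rw [interior_Icc] at hx
  obtain ⟨hx0, hmx, hlt⟩ := interval_facts hm hx
  rw [(piece_deriv m r hx0.ne' hmx.ne').deriv]
  have hbase : (1 - (m:ℝ)*x) ^ (r-1) < x ^ (r-1) :=
    Real.rpow_lt_rpow hmx.le hlt (by linarith)
  nlinarith [mul_pos hm0 (lt_trans one_pos hr1)]

private lemma g_eq (m : ℕ) (hm : 1 ≤ m) {r : ℝ} (hr : 0 < r) {p : ℝ}
    (hp : p ∈ Icc (1/((m:ℝ)+1)) (1/(m:ℝ))) :
    (⌊1/p⌋₊:ℝ) * p ^ r + (1 - (⌊1/p⌋₊:ℝ)*p) ^ r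
      = (m:ℝ) * p ^ r + (1 - (m:ℝ)*p) ^ r := by
  have hm0 : (0:ℝ) < m := by exact_mod_cast hm
  have hp0 : 0 < p := lt_of_lt_of_le (by positivity) hp.1
  rcases eq_or_lt_of_le hp.1 with he | hlt
  · have hfl : ⌊1/p⌋₊ = m + 1 := by
      rw [← he, one_div_one_div]
      rw [show (m:ℝ)+1 = ((m+1:ℕ):ℝ) by push_cast; ring, Nat.floor_natCast]
    rw [hfl, ← he]
    have h1 : 1 - ((m+1:ℕ):ℝ) * (1/((m:ℝ)+1)) = 0 := by push_cast; field_simp; ring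
    have h2 : 1 - (m:ℝ) * (1/((m:ℝ)+1)) = 1/((m:ℝ)+1) := by field_simp; ring
    rw [h1, h2, Real.zero_rpow hr.ne']
    push_cast; ring
  · have hfl : ⌊1/p⌋₊ = m := by
      rw [Nat.floor_eq_iff (by positivity)]
      constructor
      · rw [le_div_iff₀ hp0]
        calc (m:ℝ) * p ≤ (m:ℝ) * (1/(m:ℝ)) := by gcongr; exact hp.2
          _ = 1 := by field_simp
      · rw [div_lt_iff₀ hp0]
        have := (div_lt_iff₀ (by positivity : (0:ℝ) < (m:ℝ)+1)).mp hlt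
        linarith
    rw [hfl]

private lemma glue_anti {f : ℝ → ℝ} {a b c : ℝ} (hab : a ≤ b) (hbc : b ≤ c)
    (h1 : StrictAntiOn f (Icc a b)) (h2 : StrictAntiOn f (Icc b c)) :
    StrictAntiOn f (Icc a c) := by
  intro p hp q hq hpq
  rcases le_or_gt q b with h | h
  · exact h1 ⟨hp.1, hpq.le.trans h⟩ ⟨hq.1, h⟩ hpq
  · rcases le_or_gt b p with h' | h'
    · exact h2 ⟨h', hp.2⟩ ⟨h.le, hq.2⟩ hpq
    · exact lt_trans (h2 ⟨le_rfl, hbc⟩ ⟨h.le, hq.2⟩ h) (h1 ⟨hp.1, h'.le⟩ ⟨hab, le_rfl⟩ h')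

private lemma glue_mono {f : ℝ → ℝ} {a b c : ℝ} (hab : a ≤ b) (hbc : b ≤ c)
    (h1 : StrictMonoOn f (Icc a b)) (h2 : StrictMonoOn f (Icc b c)) :
    StrictMonoOn f (Icc a c) := by
  intro p hp q hq hpq
  rcases le_or_gt q b with h | h
  · exact h1 ⟨hp.1, hpq.le.trans h⟩ ⟨hq.1, h⟩ hpq
  · rcases le_or_gt b p with h' | h'
    · exact h2 ⟨h', hp.2⟩ ⟨h.le, hq.2⟩ hpq
    · exact lt_trans (h1 ⟨hp.1, h'.le⟩ ⟨hab, le_rfl⟩ h') (h2 ⟨le_rfl, hbc⟩ ⟨h.le, hq.2⟩ h)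

private lemma g_anti {r : ℝ} (hr0 : 0 < r) (hr1 : r < 1) (n : ℕ) :
    StrictAntiOn (fun p : ℝ => (⌊1/p⌋₊:ℝ) * p ^ r + (1 - (⌊1/p⌋₊:ℝ)*p) ^ r)
      (Icc (1/((n:ℝ)+1)) 1) := by
  induction n with
  | zero =>
    intro p hp q hq hpq
    norm_num at hp hq
    rw [hp, hq] at hpq
    exact absurd hpq (lt_irrefl _)
  | succ n ih =>
    have hcast : ((n+1:ℕ):ℝ) = (n:ℝ)+1 := by push_cast; ring
    rw [hcast]
    have hab : 1/((n:ℝ)+1+1) ≤ 1/((n:ℝ)+1) := by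
      exact one_div_le_one_div_of_le (by positivity) (by linarith)
    have hbc : 1/((n:ℝ)+1) ≤ 1 := by
      rw [div_le_one (by positivity)]; linarith
    have hleft : StrictAntiOn
        (fun p : ℝ => (⌊1/p⌋₊:ℝ) * p ^ r + (1 - (⌊1/p⌋₊:ℝ)*p) ^ r)
        (Icc (1/((n:ℝ)+1+1)) (1/((n:ℝ)+1))) := by
      intro p hp q hq hpq
      have hp' : p ∈ Icc (1/(((n+1:ℕ):ℝ)+1)) (1/((n+1:ℕ):ℝ)) := by rw [hcast]; exact hp
      have hq' : q ∈ Icc (1/(((n+1:ℕ):ℝ)+1)) (1/((n+1:ℕ):ℝ)) := by rw [hcast]; exact hq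
      simp only [g_eq (n+1) (Nat.le_add_left 1 n) hr0 hp',
        g_eq (n+1) (Nat.le_add_left 1 n) hr0 hq']
      exact piece_anti (n+1) (Nat.le_add_left 1 n) hr0 hr1 hp' hq' hpq
    exact glue_anti hab hbc hleft ih

private lemma g_mono {r : ℝ} (hr1 : 1 < r) (n : ℕ) :
    StrictMonoOn (fun p : ℝ => (⌊1/p⌋₊:ℝ) * p ^ r + (1 - (⌊1/p⌋₊:ℝ)*p) ^ r)
      (Icc (1/((n:ℝ)+1)) 1) := by
  have hr0 : (0:ℝ) < r := lt_trans one_pos hr1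
  induction n with
  | zero =>
    intro p hp q hq hpq
    norm_num at hp hq
    rw [hp, hq] at hpq
    exact absurd hpq (lt_irrefl _)
  | succ n ih =>
    have hcast : ((n+1:ℕ):ℝ) = (n:ℝ)+1 := by push_cast; ring
    rw [hcast]
    have hab : 1/((n:ℝ)+1+1) ≤ 1/((n:ℝ)+1) := by
      exact one_div_le_one_div_of_le (by positivity) (by linarith)
    have hbc : 1/((n:ℝ)+1) ≤ 1 := by
      rw [div_le_one (by positivity)]; linarith
    have hleft : StrictMonoOn
        (fun p : ℝ => (⌊1/p⌋₊:ℝ) * p ^ r + (1 - (⌊1/p⌋₊:ℝ)*p) ^ r)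
        (Icc (1/((n:ℝ)+1+1)) (1/((n:ℝ)+1))) := by
      intro p hp q hq hpq
      have hp' : p ∈ Icc (1/(((n+1:ℕ):ℝ)+1)) (1/((n+1:ℕ):ℝ)) := by rw [hcast]; exact hp
      have hq' : q ∈ Icc (1/(((n+1:ℕ):ℝ)+1)) (1/((n+1:ℕ):ℝ)) := by rw [hcast]; exact hq
      simp only [g_eq (n+1) (Nat.le_add_left 1 n) hr0 hp',
        g_eq (n+1) (Nat.le_add_left 1 n) hr0 hq']
      exact piece_mono (n+1) (Nat.le_add_left 1 n) hr1 hp' hq' hpq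
    exact glue_mono hab hbc hleft ih

private lemma g_nonneg {r : ℝ} (hr : 0 < r) {p : ℝ} (hp : p ∈ Ioc (0:ℝ) 1) :
    0 ≤ (⌊1/p⌋₊:ℝ) * p ^ r + (1 - (⌊1/p⌋₊:ℝ)*p) ^ r := by
  obtain ⟨hp0, hp1⟩ := hp
  have h1 : (0:ℝ) ≤ (⌊1/p⌋₊:ℝ) * p ^ r :=
    mul_nonneg (Nat.cast_nonneg _) (Real.rpow_nonneg hp0.le r)
  have h2 : (⌊1/p⌋₊:ℝ) * p ≤ 1 := by
    have h := Nat.floor_le (le_of_lt (one_div_pos.mpr hp0))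
    calc (⌊1/p⌋₊:ℝ) * p ≤ (1/p) * p := mul_le_mul_of_nonneg_right h hp0.le
      _ = 1 := one_div_mul_cancel hp0.ne'
  have h3 : (0:ℝ) ≤ (1 - (⌊1/p⌋₊:ℝ)*p) ^ r := Real.rpow_nonneg (by linarith) r
  linarith

private lemma mem_big {p : ℝ} (hp : p ∈ Ioc (0:ℝ) 1) :
    p ∈ Icc (1/((⌊1/p⌋₊:ℝ)+1)) 1 := by
  have h := Nat.lt_floor_add_one (1/p)
  constructor
  · rw [div_le_iff₀ (by positivity)]
    have := (div_lt_iff₀ hp.1).mp h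
    linarith
  · exact hp.2

theorem stmt_2 (r : ℝ) :
    (0 < r → r < 1 →
      StrictAntiOn
        (fun p : ℝ => ((⌊1 / p⌋₊ : ℝ) * p ^ r + (1 - (⌊1 / p⌋₊ : ℝ) * p) ^ r) ^ (1 / r))
        (Set.Ioc (0 : ℝ) 1)) ∧
    (1 < r →
      StrictMonoOn
        (fun p : ℝ => ((⌊1 / p⌋₊ : ℝ) * p ^ r + (1 - (⌊1 / p⌋₊ : ℝ) * p) ^ r) ^ (1 / r))
        (Set.Ioc (0 : ℝ) 1)) := by
  constructor
  · intro hr0 hr1 p hp q hq hpq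
    have hq' : q ∈ Icc (1/((⌊1/p⌋₊:ℝ)+1)) 1 :=
      ⟨le_trans (mem_big hp).1 hpq.le, hq.2⟩
    have hkey := g_anti hr0 hr1 ⌊1/p⌋₊ (mem_big hp) hq' hpq
    exact Real.rpow_lt_rpow (g_nonneg hr0 hq) hkey (by positivity)
  · intro hr1 p hp q hq hpq
    have hr0 : (0:ℝ) < r := lt_trans one_pos hr1
    have hq' : q ∈ Icc (1/((⌊1/p⌋₊:ℝ)+1)) 1 :=
      ⟨le_trans (mem_big hp).1 hpq.le, hq.2⟩
    have hkey := g_mono hr1 ⌊1/p⌋₊ (mem_big hp) hq' hpq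
    exact Real.rpow_lt_rpow (g_nonneg hr0 hp) hkey (by positivity)
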